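/- For all integers m ≥ 0 and n > m, the sum over k from 0 to m of the sum over all compositions (a_1,...,a_k) of m into k positive integer parts of (-n)^k / (k! · a_1·a_2···a_k) equals (-1)^m · C(n,m). -/

import Mathlib

/-- Compositions of `m` into `k` positive parts. -/
def posCompositions (k m : ℕ) : Finset (Fin k → ℕ) :=
  (Finset.Nat.antidiagonalTuple k m).filter fun a => ∀ i, 0 < a i

open Finset

lemma mem_posCompositions {k m : ℕ} {a : Fin k → ℕ} :
    a ∈ posCompositions k m ↔ (∑ i, a i = m) ∧ ∀ i, 0 < a i := by
  simp [posCompositions, Finset.Nat.mem_antidiagonalTuple]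

noncomputable def U (k m : ℕ) : ℝ := ∑ a ∈ posCompositions k m, (∏ i, (a i : ℝ))⁻¹

lemma sum_comp_perm {k m : ℕ} (σ : Equiv.Perm (Fin k)) (g : (Fin k → ℕ) → ℝ) :
    ∑ a ∈ posCompositions k m, g (a ∘ σ) = ∑ a ∈ posCompositions k m, g a := by
  apply Finset.sum_nbij' (fun a => a ∘ σ) (fun a => a ∘ σ.symm)
  · intro a ha
    rw [mem_posCompositions] at ha ⊢
    exact ⟨by rw [← ha.1]; exact Fintype.sum_equiv σ _ _ fun i => rfl, fun i => ha.2 _⟩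
  · intro a ha
    rw [mem_posCompositions] at ha ⊢
    exact ⟨by rw [← ha.1]; exact Fintype.sum_equiv σ.symm _ _ fun i => rfl, fun i => ha.2 _⟩
  · intro a _; funext i; simp
  · intro a _; funext i; simp
  · intro a _; rfl

lemma sum_snoc {k m : ℕ} (F : (Fin k → ℕ) → ℕ → ℝ) :
    ∑ a ∈ posCompositions (k+1) (m+1), F (Fin.init a) (a (Fin.last k))
    = ∑ s ∈ Finset.Icc 1 (m+1), ∑ b ∈ posCompositions k (m+1-s), F b s := by
  rw [Finset.sum_sigma']
  apply Finset.sum_nbij' (fun a => (⟨a (Fin.last k), Fin.init a⟩ : Σ _s : ℕ, Fin k → ℕ))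
    (fun p => Fin.snoc p.2 p.1)
  · intro a ha
    rw [mem_posCompositions] at ha
    obtain ⟨hs, hp⟩ := ha
    rw [Fin.sum_univ_castSucc] at hs
    rw [Finset.mem_sigma, Finset.mem_Icc, mem_posCompositions]
    dsimp only
    refine ⟨⟨hp _, by omega⟩, ?_, fun i => hp _⟩
    have : ∑ i, Fin.init a i = ∑ i : Fin k, a i.castSucc := by
      apply Finset.sum_congr rfl; intros; rfl
    omega
  · intro p hp
    obtain ⟨s, b⟩ := p
    rw [Finset.mem_sigma, Finset.mem_Icc, mem_posCompositions] at hp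
    dsimp only at hp ⊢
    obtain ⟨⟨h1, h2⟩, hs, hpos⟩ := hp
    rw [mem_posCompositions, Fin.sum_univ_castSucc]
    constructor
    · have : ∑ i : Fin k, (Fin.snoc b s : Fin (k+1) → ℕ) (Fin.castSucc i) = ∑ i, b i := by
        apply Finset.sum_congr rfl; intros i _; simp
      rw [this, Fin.snoc_last]
      omega
    · intro i
      refine Fin.lastCases ?_ ?_ i
      · simpa using (show 0 < s by omega)
      · intro j; simpa using hpos j
  · intro a _; exact Fin.snoc_init_self a
  · intro p _
    obtain ⟨s, b⟩ := p
    simp [Fin.snoc_last, Fin.init_snoc]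
  · intro a _; rfl

lemma U_rec (k m : ℕ) :
    (m + 1 : ℝ) * U (k+1) (m+1) = (k + 1 : ℝ) * ∑ j ∈ range (m+1), U k j := by
  have step1 : (m + 1 : ℝ) * U (k+1) (m+1)
      = ∑ i : Fin (k+1), ∑ a ∈ posCompositions (k+1) (m+1),
          (a i : ℝ) * (∏ j, (a j : ℝ))⁻¹ := by
    rw [U, Finset.mul_sum, Finset.sum_comm]
    apply Finset.sum_congr rfl
    intro a ha
    rw [mem_posCompositions] at ha
    rw [← Finset.sum_mul]
    congr 1
    rw [← Nat.cast_sum, ha.1]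
    push_cast; ring
  have hsym : ∀ i : Fin (k+1),
      ∑ a ∈ posCompositions (k+1) (m+1), (a i : ℝ) * (∏ j, (a j : ℝ))⁻¹
      = ∑ a ∈ posCompositions (k+1) (m+1), (a (Fin.last k) : ℝ) * (∏ j, (a j : ℝ))⁻¹ := by
    intro i
    rw [← sum_comp_perm (Equiv.swap i (Fin.last k))
        (fun a => (a (Fin.last k) : ℝ) * (∏ j, (a j : ℝ))⁻¹)]
    apply Finset.sum_congr rfl
    intro a _
    simp only [Function.comp]
    rw [Equiv.swap_apply_right]
    congr 2
    exact (Equiv.prod_comp (Equiv.swap i (Fin.last k)) (fun j => (a j : ℝ))).symm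
  have step2 : ∑ a ∈ posCompositions (k+1) (m+1), (a (Fin.last k) : ℝ) * (∏ j, (a j : ℝ))⁻¹
      = ∑ j ∈ range (m+1), U k j := by
    have : ∀ a : Fin (k+1) → ℕ, (a (Fin.last k) : ℝ) * (∏ j, (a j : ℝ))⁻¹
        = (fun (b : Fin k → ℕ) (s : ℕ) =>
            (s : ℝ) * ((∏ i, (b i : ℝ)) * (s : ℝ))⁻¹) (Fin.init a) (a (Fin.last k)) := by
      intro a
      simp only [Fin.prod_univ_castSucc]
      rfl
    rw [Finset.sum_congr rfl fun a _ => this a,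
      sum_snoc (fun (b : Fin k → ℕ) (s : ℕ) => (s : ℝ) * ((∏ i, (b i : ℝ)) * (s : ℝ))⁻¹)]
    have heq : ∀ s ∈ Finset.Icc 1 (m+1),
        ∑ b ∈ posCompositions k (m+1-s),
          (s : ℝ) * ((∏ i, (b i : ℝ)) * (s : ℝ))⁻¹ = U k (m+1-s) := by
      intro s hs
      rw [Finset.mem_Icc] at hs
      have hs0 : (s : ℝ) ≠ 0 := Nat.cast_ne_zero.mpr (by omega)
      rw [U]
      apply Finset.sum_congr rfl
      intro b _
      rw [mul_inv, mul_comm (∏ i, (b i : ℝ))⁻¹, ← mul_assoc, mul_inv_cancel₀ hs0, one_mul]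
    rw [Finset.sum_congr rfl heq]
    apply Finset.sum_nbij' (fun s => m + 1 - s) (fun j => m + 1 - j)
    · intro s hs; rw [Finset.mem_Icc] at hs; rw [Finset.mem_range]; omega
    · intro j hj; rw [Finset.mem_range] at hj; rw [Finset.mem_Icc]; omega
    · intro s hs; rw [Finset.mem_Icc] at hs; omega
    · intro j hj; rw [Finset.mem_range] at hj; omega
    · intro s _; rfl
  rw [step1, Finset.sum_congr rfl fun i _ => hsym i, Finset.sum_const, card_univ,
    Fintype.card_fin, nsmul_eq_mul, step2]
  push_cast
  ring

lemma posCompositions_eq_empty {k m : ℕ} (h : m < k) : posCompositions k m = ∅ := by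
  ext a
  simp only [mem_posCompositions, Finset.notMem_empty, iff_false, not_and]
  intro hs hp
  have : k ≤ ∑ i, a i := by
    calc k = ∑ _i : Fin k, 1 := by simp
    _ ≤ ∑ i, a i := Finset.sum_le_sum fun i _ => hp i
  omega

lemma U_eq_zero {k m : ℕ} (h : m < k) : U k m = 0 := by
  rw [U, posCompositions_eq_empty h, Finset.sum_empty]

lemma U_zero_zero : U 0 0 = 1 := by
  have : posCompositions 0 0 = {![]} := by
    ext a
    simp [mem_posCompositions]
    ext i; exact absurd i.2 (by omega)
  simp [U, this]

lemma U_zero_succ (m : ℕ) : U 0 (m+1) = 0 := by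
  have : posCompositions 0 (m+1) = ∅ := by
    ext a; simp [mem_posCompositions]
  rw [U, this, Finset.sum_empty]

noncomputable def S (m : ℕ) (x : ℝ) : ℝ :=
  ∑ k ∈ range (m+1), x ^ k / (k.factorial : ℝ) * U k m

lemma S_rec (m : ℕ) (x : ℝ) :
    (m + 1 : ℝ) * S (m+1) x = x * ∑ j ∈ range (m+1), S j x := by
  have h1 : S (m+1) x = ∑ k ∈ range (m+1), x ^ (k+1) / ((k+1).factorial : ℝ) * U (k+1) (m+1) := by
    rw [S, Finset.sum_range_succ']
    simp [U_zero_succ]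
  rw [h1, Finset.mul_sum]
  have h2 : ∀ k ∈ range (m+1),
      (m + 1 : ℝ) * (x ^ (k+1) / ((k+1).factorial : ℝ) * U (k+1) (m+1))
      = x * ∑ j ∈ range (m+1), x ^ k / (k.factorial : ℝ) * U k j := by
    intro k _
    have : (m + 1 : ℝ) * (x ^ (k+1) / ((k+1).factorial : ℝ) * U (k+1) (m+1))
        = x ^ (k+1) / ((k+1).factorial : ℝ) * ((m + 1 : ℝ) * U (k+1) (m+1)) := by ring
    rw [this, U_rec, Finset.mul_sum, Finset.mul_sum, Finset.mul_sum]
    apply Finset.sum_congr rfl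
    intro j _
    have hf : ((k+1).factorial : ℝ) = (k + 1 : ℝ) * (k.factorial : ℝ) := by
      rw [Nat.factorial_succ]; push_cast; ring
    have hk1 : (k + 1 : ℝ) ≠ 0 := by positivity
    have hkf : (k.factorial : ℝ) ≠ 0 := Nat.cast_ne_zero.mpr k.factorial_ne_zero
    rw [hf]
    field_simp [hf]
    ring
  rw [Finset.sum_congr rfl h2, ← Finset.mul_sum, Finset.sum_comm]
  congr 1
  apply Finset.sum_congr rfl
  intro j hj
  rw [Finset.mem_range] at hj
  rw [S]
  symm
  apply Finset.sum_subset
  · exact Finset.range_subset_range.mpr (by omega)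
  · intro k _ hk
    rw [Finset.mem_range] at hk
    rw [U_eq_zero (by omega), mul_zero]

lemma prod_aux (x : ℝ) (m : ℕ) :
    ∏ i ∈ range (m+1), (x + i) = x * ∏ i ∈ range m, (x + 1 + i) := by
  rw [Finset.prod_range_succ']
  have : ∀ i ∈ range m, (x + ((i:ℕ)+1 : ℕ)) = x + 1 + i := by
    intro i _; push_cast; ring
  rw [Finset.prod_congr rfl this]
  push_cast
  ring

lemma sum_aux (x : ℝ) (m : ℕ) :
    ∑ j ∈ range (m+1), (∏ i ∈ range j, (x + i)) / (j.factorial : ℝ)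
    = (∏ i ∈ range m, (x + 1 + i)) / (m.factorial : ℝ) := by
  induction m with
  | zero => simp
  | succ m ih =>
    rw [Finset.sum_range_succ, ih, prod_aux, Finset.prod_range_succ]
    have h1 : ((m+1).factorial : ℝ) = (m + 1 : ℝ) * (m.factorial : ℝ) := by
      rw [Nat.factorial_succ]; push_cast; ring
    have hm1 : (m + 1 : ℝ) ≠ 0 := by positivity
    have hmf : (m.factorial : ℝ) ≠ 0 := Nat.cast_ne_zero.mpr m.factorial_ne_zero
    rw [h1]
    field_simp [h1]
    ring

lemma S_closed (x : ℝ) (m : ℕ) :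
    S m x = (∏ i ∈ range m, (x + i)) / (m.factorial : ℝ) := by
  induction m using Nat.strong_induction_on with
  | _ m ih =>
    match m with
    | 0 => simp [S, U_zero_zero]
    | m + 1 =>
      have hrec := S_rec m x
      have hsum : ∑ j ∈ range (m+1), S j x
          = (∏ i ∈ range m, (x + 1 + i)) / (m.factorial : ℝ) := by
        rw [← sum_aux x m]
        apply Finset.sum_congr rfl
        intro j hj
        rw [Finset.mem_range] at hj
        exact ih j (by omega)
      rw [hsum] at hrec
      have hm1 : (m + 1 : ℝ) ≠ 0 := by positivity
      have h1 : ((m+1).factorial : ℝ) = (m + 1 : ℝ) * (m.factorial : ℝ) := by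
        rw [Nat.factorial_succ]; push_cast; ring
      have hmf : (m.factorial : ℝ) ≠ 0 := Nat.cast_ne_zero.mpr m.factorial_ne_zero
      have := prod_aux x m
      rw [h1]
      field_simp [h1] at hrec ⊢
      rw [this]
      linarith [hrec]

theorem stmt0 (m n : ℕ) (hnm : m < n) :
    ∑ k ∈ Finset.range (m + 1), ∑ a ∈ posCompositions k m,
      (-(n : ℝ)) ^ k / ((k.factorial : ℝ) * ∏ i, (a i : ℝ))
    = (-1 : ℝ) ^ m * (n.choose m : ℝ) := by
  have hL : ∑ k ∈ Finset.range (m + 1), ∑ a ∈ posCompositions k m,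
      (-(n : ℝ)) ^ k / ((k.factorial : ℝ) * ∏ i, (a i : ℝ)) = S m (-(n:ℝ)) := by
    rw [S]
    apply Finset.sum_congr rfl
    intro k _
    rw [U, Finset.mul_sum]
    apply Finset.sum_congr rfl
    intro a _
    rw [div_mul_eq_div_div_swap, div_eq_mul_inv, div_eq_mul_inv]
    ring
  rw [hL, S_closed]
  have hprod : ∏ i ∈ range m, (-(n:ℝ) + i) = (-1:ℝ)^m * (n.descFactorial m : ℝ) := by
    have h1 : ∀ i ∈ range m, (-(n:ℝ) + i) = (-1) * ((n:ℝ) - i) := by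
      intro i _; ring
    rw [Finset.prod_congr rfl h1, Finset.prod_mul_distrib, Finset.prod_const, card_range]
    congr 1
    rw [Nat.descFactorial_eq_prod_range, Nat.cast_prod]
    apply Finset.prod_congr rfl
    intro i hi
    rw [Finset.mem_range] at hi
    rw [Nat.cast_sub (by omega)]
  rw [hprod, Nat.descFactorial_eq_factorial_mul_choose]
  have hmf : (m.factorial : ℝ) ≠ 0 := Nat.cast_ne_zero.mpr m.factorial_ne_zero
  push_cast
  field_simp
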